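/- Let α be a unital transitive partial action of G on A = ∏_{λ∈Λ} A_λ (a product of indecomposable unital rings), H the stabilizer of the block A₁, Λ' a left transversal of H in G containing 1 with Λ ⊆ Λ'. Then for g ∈ Λ': (i) g ∈ Λ iff A₁ ⊆ D_{g⁻¹}; (ii) if g ∈ Λ and x ∈ G, then the representative of xg in Λ' lies in Λ iff A_g ⊆ D_{x⁻¹}, in which case α_x(A_g) = A_{\overline{xg}}. -/
import Mathlib


/-- Lemma 5.1 of [DES2], at the level of the induced partial action of `G` on the set `X`
of blocks of `A = ∏_{λ∈Λ} A_λ`: here `D g` is the set of blocks of `D_g` and `σ g` is the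
bijection `D g⁻¹ → D g` induced by `α_g`; the inclusion `A_μ ⊆ D_g` becomes `μ ∈ D g`;
the action is transitive, `x₀` is the base block `A₁`, `H = {h | x₀ ∈ D h⁻¹, σ h x₀ = x₀}`
is its stabilizer, `Λ'` is a left transversal of `H` containing `1`, and `bar y` is the
representative in `Λ'` of `y H`.  Then, for `g ∈ Λ'`:
(i) membership of `x₀` in `D (g h)⁻¹` for some `h ∈ H` is equivalent to `x₀ ∈ D g⁻¹`
    (so "`g ∈ Λ`", i.e. `A₁ ⊆ D_{g⁻¹}`, only depends on the coset `gH`);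
(ii) if `x₀ ∈ D g⁻¹` (i.e. `g ∈ Λ`), then for `x ∈ G` the block `A_g = σ g x₀` lies in
    `D_{x⁻¹}` iff `bar (x g) ∈ Λ`, in which case `α_x(A_g) = A_{bar (x g)}`. -/
theorem transversal_block_lemma
    {G : Type*} [Group G] {X : Type*}
    (D : G → Set X) (σ : G → X → X)
    (hD1 : D 1 = Set.univ)
    (hσ1 : ∀ x, σ 1 x = x)
    (hbij : ∀ g, Set.BijOn (σ g) (D g⁻¹) (D g))
    (hcomp : ∀ g h x, x ∈ D h⁻¹ → σ h x ∈ D g⁻¹ →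
      x ∈ D (g * h)⁻¹ ∧ σ g (σ h x) = σ (g * h) x)
    (htrans : ∀ x y : X, ∃ g, x ∈ D g⁻¹ ∧ σ g x = y)
    (x₀ : X)
    (Λ' : Set G) (hone : (1 : G) ∈ Λ')
    (bar : G → G)
    (hbar : ∀ y, bar y ∈ Λ' ∧
      ∃ h : G, (x₀ ∈ D h⁻¹ ∧ σ h x₀ = x₀) ∧ y = bar y * h)
    (hbar_unique : ∀ y l, l ∈ Λ' →
      (∃ h : G, (x₀ ∈ D h⁻¹ ∧ σ h x₀ = x₀) ∧ y = l * h) → l = bar y) :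
    ∀ g ∈ Λ',
      ((∃ h : G, (x₀ ∈ D h⁻¹ ∧ σ h x₀ = x₀) ∧ x₀ ∈ D (g * h)⁻¹) ↔ x₀ ∈ D g⁻¹) ∧
      (x₀ ∈ D g⁻¹ → ∀ x : G,
        ((x₀ ∈ D (bar (x * g))⁻¹) ↔ σ g x₀ ∈ D x⁻¹) ∧
        (σ g x₀ ∈ D x⁻¹ → σ x (σ g x₀) = σ (bar (x * g)) x₀)) := by
  have invcomp : ∀ g x, x ∈ D g⁻¹ → σ g⁻¹ (σ g x) = x := by
    intro g x hx
    have h1 : σ g x ∈ D (g⁻¹)⁻¹ := by simpa using (hbij g).mapsTo hx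
    have := (hcomp g⁻¹ g x hx h1).2
    simpa [hσ1] using this
  intro g hg
  constructor
  · constructor
    · rintro ⟨h, ⟨hxh, hsh⟩, hgh⟩
      have hxh' : x₀ ∈ D (h⁻¹)⁻¹ := by simpa [hsh] using (hbij h).mapsTo hxh
      have hsh' : σ h⁻¹ x₀ = x₀ := by
        have := invcomp h x₀ hxh
        rwa [hsh] at this
      have := (hcomp (g * h) h⁻¹ x₀ hxh' (by rwa [hsh'])).1
      simpa using this
    · intro hx
      exact ⟨1, ⟨by simp [hD1], hσ1 x₀⟩, by simpa using hx⟩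
  · intro hx x
    obtain ⟨hbΛ, h, ⟨hxh, hsh⟩, hxg⟩ := hbar (x * g)
    set b := bar (x * g) with hbdef
    have hxh' : x₀ ∈ D (h⁻¹)⁻¹ := by simpa [hsh] using (hbij h).mapsTo hxh
    have hsh' : σ h⁻¹ x₀ = x₀ := by
      have := invcomp h x₀ hxh
      rwa [hsh] at this
    have hy : σ g x₀ ∈ D (g⁻¹)⁻¹ := by simpa using (hbij g).mapsTo hx
    have hyinv : σ g⁻¹ (σ g x₀) = x₀ := invcomp g x₀ hx
    refine ⟨⟨?_, ?_⟩, ?_⟩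
    · intro hb'
      have h1 := hcomp (b) h x₀ hxh (by rwa [hsh])
      have h2 : x₀ ∈ D (x * g)⁻¹ := by rw [hxg]; exact h1.1
      have h3 := (hcomp (x * g) g⁻¹ (σ g x₀) hy (by rwa [hyinv])).1
      simpa using h3
    · intro hyx
      have h1 := hcomp x g x₀ hx hyx
      have h2 : x₀ ∈ D (b * h)⁻¹ := by rw [← hxg]; exact h1.1
      have := (hcomp (b * h) h⁻¹ x₀ hxh' (by rwa [hsh'])).1
      simpa using this
    · intro hyx
      have h1 := hcomp x g x₀ hx hyx
      have h2 : x₀ ∈ D (b * h)⁻¹ := by rw [← hxg]; exact h1.1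
      have hb' : x₀ ∈ D (b)⁻¹ := by
        have := (hcomp (b * h) h⁻¹ x₀ hxh' (by rwa [hsh'])).1
        simpa using this
      have h3 := hcomp (b) h x₀ hxh (by rwa [hsh])
      rw [h1.2, hxg, ← h3.2, hsh]
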